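/- Let n be a nonzero integer and let G = (ℂ \ {0}) × ℂ × ℂ with the product (a,u,v)(a',u',v') = (aa', u + aⁿ u', v + a v'). Define i(a,u) = (a, u, 0) for a ∈ ℂ\{0}, u ∈ ℂ, and j(v) = (v, 0, v−1) for v ∈ ℂ\{0}. Let a, v ∈ ℂ \ {0} and u ∈ ℂ with a(v−1) + 1 ≠ 0, and set α = a(v−1) + 1, β₁ = va/(a(v−1)+1), β₂ = u/(a(v−1)+1)ⁿ. Then α ≠ 0, β₁ ≠ 0, and j(α) · i(β₁, β₂) = i(a,u) · j(v) in G. -/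

import Mathlib

/-- In `G = (ℂ \ {0}) × ℂ × ℂ` with product
`(a,u,v)(a',u',v') = (aa', u + aⁿu', v + av')` (`n ≠ 0` an integer), with
`i(a,u) = (a,u,0)` and `j(v) = (v,0,v−1)`: if `a(v−1) + 1 ≠ 0` then
`α = a(v−1)+1 ≠ 0`, `β₁ = va/(a(v−1)+1) ≠ 0`, and with `β₂ = u/(a(v−1)+1)ⁿ` one
has `j(α)·i(β₁,β₂) = i(a,u)·j(v)`. -/
theorem three_dim_matched_pair_factorization
    (n : ℤ) (hn : n ≠ 0)
    (mul : ℂ × ℂ × ℂ → ℂ × ℂ × ℂ → ℂ × ℂ × ℂ)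
    (hmul : ∀ a u v a' u' v' : ℂ, mul (a, u, v) (a', u', v') =
      (a * a', u + a ^ n * u', v + a * v'))
    (i : ℂ × ℂ → ℂ × ℂ × ℂ) (j : ℂ → ℂ × ℂ × ℂ)
    (hi : ∀ a u : ℂ, i (a, u) = (a, u, 0))
    (hj : ∀ v : ℂ, j v = (v, 0, v - 1))
    (a v : ℂ) (u : ℂ) (ha : a ≠ 0) (hv : v ≠ 0) (h : a * (v - 1) + 1 ≠ 0)
    (α β₁ β₂ : ℂ)
    (hα : α = a * (v - 1) + 1)
    (hβ₁ : β₁ = v * a / (a * (v - 1) + 1))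
    (hβ₂ : β₂ = u / (a * (v - 1) + 1) ^ n) :
    α ≠ 0 ∧ β₁ ≠ 0 ∧ mul (j α) (i (β₁, β₂)) = mul (i (a, u)) (j v) := by
  subst hα hβ₁ hβ₂
  refine ⟨h, div_ne_zero (mul_ne_zero hv ha) h, ?_⟩
  rw [hj, hi, hi, hj, hmul, hmul]
  have hp : (a * (v - 1) + 1) ^ n ≠ 0 := zpow_ne_zero n h
  simp only [Prod.mk.injEq]
  refine ⟨by field_simp, by field_simp; ring, by ring⟩
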